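/- Assume Σ_ℓ(0) is integral, let α ∈ Σ_ℓ, and let M_α be the submonoid of ℤ × X generated by (1, 0) and {(D_ℓ(y), y − α) : y ∈ X}. Then there exists a real number M* > 0 such that for every integer t ≥ 0 and every x ∈ X with C_ℓ(x) ≥ 2^t·M*, one has (D_ℓ(x) − t, x − α) ∈ M_α. (Equivalently, the monomial s^{D_ℓ(x)}·w^{x−α} lies in I^t·A_{ℓ,α,0}, where I is the maximal ideal of the discrete valuation ring R.) -/

import Mathlib

open scoped BigOperators Pointwise

namespace NFC

/-- The coordinatewise embedding of the lattice `X = ℤ^g` into `X_ℝ = ℝ^g`. -/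
def iota {g : ℕ} (x : Fin g → ℤ) : Fin g → ℝ := fun i => (x i : ℝ)

/-- The ℝ-linear extension of an integral linear functional `u ∈ X^∨` to `X_ℝ`. -/
noncomputable def extd {g : ℕ} (u : (Fin g → ℤ) →ₗ[ℤ] ℤ) (x : Fin g → ℝ) : ℝ :=
  ∑ i, (u (Pi.single i 1) : ℝ) * x i

/-- `E_ℓ(u) = ℓ · u(φ(u))`. -/
def El {g : ℕ} {Y : Submodule ℤ (Fin g → ℤ)}
    (φ : ((Fin g → ℤ) →ₗ[ℤ] ℤ) → Y) (ℓ : ℕ) (u : (Fin g → ℤ) →ₗ[ℤ] ℤ) : ℤ :=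
  (ℓ : ℤ) * u (φ u : Fin g → ℤ)

/-- `Σ_ℓ = {α ∈ X : E_ℓ(u) + u(α) ≥ 0 for all u ∈ X^∨}`. -/
def SigmaL {g : ℕ} {Y : Submodule ℤ (Fin g → ℤ)}
    (φ : ((Fin g → ℤ) →ₗ[ℤ] ℤ) → Y) (ℓ : ℕ) : Set (Fin g → ℤ) :=
  {α | ∀ u : (Fin g → ℤ) →ₗ[ℤ] ℤ, 0 ≤ El φ ℓ u + u α}

/-- The Voronoi polytope `Σ_ℓ(c)`, defined w.r.t. the norm `‖z‖ = √(B̄(z,z))`. -/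
noncomputable def VorP {g : ℕ} {Y : Submodule ℤ (Fin g → ℤ)}
    (Bb : (Fin g → ℝ) →ₗ[ℝ] (Fin g → ℝ) →ₗ[ℝ] ℝ)
    (φ : ((Fin g → ℤ) →ₗ[ℤ] ℤ) → Y) (ℓ : ℕ)
    (c : (Fin g → ℤ) →ₗ[ℤ] ℤ) : Set (Fin g → ℝ) :=
  {x | ∀ u : (Fin g → ℤ) →ₗ[ℤ] ℤ,
    Real.sqrt (Bb (x - iota ((2 * (ℓ : ℤ)) • ((φ c : Fin g → ℤ))))
               (x - iota ((2 * (ℓ : ℤ)) • ((φ c : Fin g → ℤ))))) ≤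
    Real.sqrt (Bb (x - iota ((2 * (ℓ : ℤ)) • ((φ u : Fin g → ℤ))))
               (x - iota ((2 * (ℓ : ℤ)) • ((φ u : Fin g → ℤ)))))}

/-- A subset `Δ ⊆ X_ℝ` is integral: a bounded convex polytope equal to the convex hull
of `Δ ∩ X`, symmetric about `0`, containing `0`, with `Δ ∩ X` containing a ℤ-basis. -/
def IsIntegral {g : ℕ} (Δ : Set (Fin g → ℝ)) : Prop :=
  Bornology.IsBounded Δ ∧
  Δ = convexHull ℝ (Δ ∩ Set.range (iota (g := g))) ∧
  Δ = -Δ ∧ (0 : Fin g → ℝ) ∈ Δ ∧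
  ∃ b : Module.Basis (Fin g) ℤ (Fin g → ℤ), ∀ i, iota (b i) ∈ Δ

/-- `Σ_ℓ^α = (α + 2ℓφ(X^∨)) ∩ Σ_ℓ`. -/
def SigmaAlpha {g : ℕ} {Y : Submodule ℤ (Fin g → ℤ)}
    (φ : ((Fin g → ℤ) →ₗ[ℤ] ℤ) → Y) (ℓ : ℕ) (α : Fin g → ℤ) : Set (Fin g → ℤ) :=
  {β | β ∈ SigmaL φ ℓ ∧ ∃ u : (Fin g → ℤ) →ₗ[ℤ] ℤ, β = α + (2 * (ℓ : ℤ)) • ((φ u : Fin g → ℤ))}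

/-- The convex cone generated by a set `S` (the set of all nonnegative combinations). -/
def conicHull {M : Type*} [AddCommMonoid M] [Module ℝ M] (S : Set M) : Set M :=
  {y | ∃ (n : ℕ) (c : Fin n → ℝ) (v : Fin n → M),
    (∀ i, 0 ≤ c i) ∧ (∀ i, v i ∈ S) ∧ y = ∑ i, c i • v i}

/-- `Cone(C_ℓ^β)`: the convex cone in `X_ℝ` generated by `{γ − β : γ ∈ Σ_ℓ}`. -/
def coneC {g : ℕ} {Y : Submodule ℤ (Fin g → ℤ)}
    (φ : ((Fin g → ℤ) →ₗ[ℤ] ℤ) → Y) (ℓ : ℕ) (β : Fin g → ℤ) : Set (Fin g → ℝ) :=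
  conicHull {w | ∃ γ ∈ SigmaL φ ℓ, w = iota (γ - β)}


section auxiliary

lemma bb_nonneg {V : Type*} [AddCommGroup V] [Module ℝ V] (Bb : V →ₗ[ℝ] V →ₗ[ℝ] ℝ)
    (hp : ∀ x, x ≠ 0 → 0 < Bb x x) : ∀ x, 0 ≤ Bb x x := by
  intro x
  rcases eq_or_ne x 0 with h | h
  · simp [h]
  · exact (hp x h).le

lemma bb_cs {V : Type*} [AddCommGroup V] [Module ℝ V] (Bb : V →ₗ[ℝ] V →ₗ[ℝ] ℝ)
    (hs : ∀ x y, Bb x y = Bb y x) (hp : ∀ x, x ≠ 0 → 0 < Bb x x) (v w : V) :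
    (Bb v w) ^ 2 ≤ Bb v v * Bb w w := by
  rcases eq_or_ne w 0 with h | h
  · simp [h]
  have hww : 0 < Bb w w := hp w h
  have key : 0 ≤ Bb (v - (Bb v w / Bb w w) • w) (v - (Bb v w / Bb w w) • w) :=
    bb_nonneg Bb hp _
  simp only [map_sub, map_smul, LinearMap.sub_apply, LinearMap.smul_apply, smul_eq_mul] at key
  rw [hs w v] at key
  have ht : Bb v w / Bb w w * Bb w w = Bb v w := div_mul_cancel₀ _ hww.ne'
  nlinarith [key, hww, ht]

lemma nn_sq {V : Type*} [AddCommGroup V] [Module ℝ V] (Bb : V →ₗ[ℝ] V →ₗ[ℝ] ℝ)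
    (hp : ∀ x, x ≠ 0 → 0 < Bb x x) (v : V) :
    Real.sqrt (Bb v v) ^ 2 = Bb v v := Real.sq_sqrt (bb_nonneg Bb hp v)

lemma nn_add_le {V : Type*} [AddCommGroup V] [Module ℝ V] (Bb : V →ₗ[ℝ] V →ₗ[ℝ] ℝ)
    (hs : ∀ x y, Bb x y = Bb y x) (hp : ∀ x, x ≠ 0 → 0 < Bb x x) (v w : V) :
    Real.sqrt (Bb (v + w) (v + w)) ≤ Real.sqrt (Bb v v) + Real.sqrt (Bb w w) := by
  have h1 : Bb v w ≤ Real.sqrt (Bb v v) * Real.sqrt (Bb w w) := by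
    have hcs := bb_cs Bb hs hp v w
    have h2 : Bb v w ≤ |Bb v w| := le_abs_self _
    have h3 : |Bb v w| = Real.sqrt ((Bb v w) ^ 2) := (Real.sqrt_sq_eq_abs _).symm
    rw [h3] at h2
    calc Bb v w ≤ Real.sqrt ((Bb v w) ^ 2) := h2
      _ ≤ Real.sqrt (Bb v v * Bb w w) := Real.sqrt_le_sqrt hcs
      _ = Real.sqrt (Bb v v) * Real.sqrt (Bb w w) := Real.sqrt_mul (bb_nonneg Bb hp v) _
  have key : Bb (v + w) (v + w) ≤ (Real.sqrt (Bb v v) + Real.sqrt (Bb w w)) ^ 2 := by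
    have e : Bb (v + w) (v + w) = Bb v v + 2 * Bb v w + Bb w w := by
      simp only [map_add, LinearMap.add_apply]
      rw [hs w v]; ring
    rw [e]
    nlinarith [nn_sq Bb hp v, nn_sq Bb hp w, h1]
  calc Real.sqrt (Bb (v + w) (v + w))
      ≤ Real.sqrt ((Real.sqrt (Bb v v) + Real.sqrt (Bb w w)) ^ 2) := Real.sqrt_le_sqrt key
    _ = |Real.sqrt (Bb v v) + Real.sqrt (Bb w w)| := Real.sqrt_sq_eq_abs _
    _ = _ := abs_of_nonneg (by positivity)

lemma nn_smul {V : Type*} [AddCommGroup V] [Module ℝ V] (Bb : V →ₗ[ℝ] V →ₗ[ℝ] ℝ)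
    (c : ℝ) (v : V) :
    Real.sqrt (Bb (c • v) (c • v)) = |c| * Real.sqrt (Bb v v) := by
  have h : Bb (c • v) (c • v) = c ^ 2 * Bb v v := by
    simp only [map_smul, LinearMap.smul_apply, smul_eq_mul]; ring
  rw [h, Real.sqrt_mul (sq_nonneg c), Real.sqrt_sq_eq_abs]

lemma single_eq_ite {g : ℕ} (i : Fin g) :
    (Pi.single i 1 : Fin g → ℝ) = fun j => if i = j then (1:ℝ) else 0 := by
  ext j
  by_cases h : i = j <;> simp [Pi.single_apply, eq_comm, h]

lemma bb_expand {g : ℕ} (Bb : (Fin g → ℝ) →ₗ[ℝ] (Fin g → ℝ) →ₗ[ℝ] ℝ) (v w : Fin g → ℝ) :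
    Bb v w = ∑ i, ∑ j, v i * w j * Bb (Pi.single i 1) (Pi.single j 1) := by
  conv_lhs => rw [pi_eq_sum_univ v, pi_eq_sum_univ w]
  simp only [← single_eq_ite, map_sum, LinearMap.sum_apply, map_smul, LinearMap.smul_apply,
    smul_eq_mul]
  rw [Finset.sum_comm]
  refine Finset.sum_congr rfl fun i _ => ?_
  rw [Finset.mul_sum]
  exact Finset.sum_congr rfl fun j _ => by ring

lemma bb_bound {g : ℕ} (Bb : (Fin g → ℝ) →ₗ[ℝ] (Fin g → ℝ) →ₗ[ℝ] ℝ) (v : Fin g → ℝ)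
    (A : Fin g → ℝ) (hA : ∀ i, |v i| ≤ A i) :
    Bb v v ≤ ∑ i, ∑ j, A i * A j * |Bb (Pi.single i 1) (Pi.single j 1)| := by
  rw [bb_expand]
  apply Finset.sum_le_sum; intro i _
  apply Finset.sum_le_sum; intro j _
  have h0i := (abs_nonneg (v i)).trans (hA i)
  have h0j := (abs_nonneg (v j)).trans (hA j)
  calc v i * v j * Bb (Pi.single i 1) (Pi.single j 1)
      ≤ |v i * v j * Bb (Pi.single i 1) (Pi.single j 1)| := le_abs_self _
    _ = |v i| * |v j| * |Bb (Pi.single i 1) (Pi.single j 1)| := by rw [abs_mul, abs_mul]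
    _ ≤ A i * A j * |Bb (Pi.single i 1) (Pi.single j 1)| := by
        gcongr <;> [exact hA i; exact hA j]

lemma idx_smul_mem {g : ℕ} (Y : Submodule ℤ (Fin g → ℤ)) (w : Fin g → ℤ) :
    (Y.toAddSubgroup.index : ℤ) • w ∈ Y := by
  have h := AddSubgroup.nsmul_index_mem Y.toAddSubgroup w
  rwa [natCast_zsmul]


lemma iota_add {g : ℕ} (v w : Fin g → ℤ) : iota (v + w) = iota v + iota w := by
  funext i; simp [iota]

lemma iota_sub {g : ℕ} (v w : Fin g → ℤ) : iota (v - w) = iota v - iota w := by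
  funext i; simp [iota]

lemma iota_zsmul {g : ℕ} (c : ℤ) (v : Fin g → ℤ) : iota (c • v) = (c : ℝ) • iota v := by
  funext i; simp [iota]

section structural

variable {g : ℕ} {Y : Submodule ℤ (Fin g → ℤ)}
  (B : Y →ₗ[ℤ] (Fin g → ℤ) →ₗ[ℤ] ℤ)
  (hBpos : ∀ y : Y, y ≠ 0 → 0 < B y (y : Fin g → ℤ))
  (N : ℕ)
  (φ : ((Fin g → ℤ) →ₗ[ℤ] ℤ) → Y)
  (hφ : ∀ u : (Fin g → ℤ) →ₗ[ℤ] ℤ, B (φ u) = (N : ℤ) • u)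

include hBpos in
lemma B_inj : ∀ y z : Y, B y = B z → y = z := by
  intro y z h
  by_contra hne
  have hyz : y - z ≠ 0 := sub_ne_zero.mpr hne
  have hlt := hBpos (y - z) hyz
  rw [map_sub] at hlt
  simp only [LinearMap.sub_apply, h] at hlt
  rw [sub_self] at hlt
  exact lt_irrefl _ hlt

include hBpos hφ in
lemma phi_add (u v : (Fin g → ℤ) →ₗ[ℤ] ℤ) : φ (u + v) = φ u + φ v := by
  apply B_inj B hBpos
  rw [map_add, hφ, hφ, hφ, smul_add]

include hBpos hφ in
lemma phi_neg (u : (Fin g → ℤ) →ₗ[ℤ] ℤ) : φ (-u) = -φ u := by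
  apply B_inj B hBpos
  rw [map_neg, hφ, hφ, smul_neg]

include hBpos hφ in
lemma phi_sub (u v : (Fin g → ℤ) →ₗ[ℤ] ℤ) : φ (u - v) = φ u - φ v := by
  rw [sub_eq_add_neg, phi_add B hBpos N φ hφ, phi_neg B hBpos N φ hφ, sub_eq_add_neg]

include hBpos hφ in
lemma phi_zero : φ 0 = 0 := by
  apply B_inj B hBpos
  rw [map_zero, hφ, smul_zero]

variable
  (Bb : (Fin g → ℝ) →ₗ[ℝ] (Fin g → ℝ) →ₗ[ℝ] ℝ)
  (hBbsymm : ∀ x y : Fin g → ℝ, Bb x y = Bb y x)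
  (hBbpos : ∀ x : Fin g → ℝ, x ≠ 0 → 0 < Bb x x)
  (hBbcompat : ∀ (y : Y) (x : Fin g → ℤ), Bb (iota (y : Fin g → ℤ)) (iota x) = (B y x : ℝ))

include hφ hBbcompat in
lemma bb_phi (u : (Fin g → ℤ) →ₗ[ℤ] ℤ) (w : Fin g → ℤ) :
    Bb (iota ((φ u : Fin g → ℤ))) (iota w) = (N : ℝ) * ((u w : ℤ) : ℝ) := by
  rw [hBbcompat (φ u) w, hφ u, LinearMap.smul_apply, smul_eq_mul]
  push_cast
  ring

include hφ hBbsymm hBbcompat in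
lemma q_expand (ℓ : ℕ) (γ : Fin g → ℤ) (z : (Fin g → ℤ) →ₗ[ℤ] ℤ) :
    Bb (iota (γ + (2 * (ℓ:ℤ)) • ((φ z : Fin g → ℤ))))
       (iota (γ + (2 * (ℓ:ℤ)) • ((φ z : Fin g → ℤ)))) =
    Bb (iota γ) (iota γ)
      + 4 * (ℓ:ℝ) * (N:ℝ) * ((z γ : ℤ) : ℝ)
      + 4 * (ℓ:ℝ) * (N:ℝ) * ((El φ ℓ z : ℤ) : ℝ) := by
  rw [iota_add, iota_zsmul]
  have h1 : Bb (iota ((φ z : Fin g → ℤ))) (iota γ) = (N : ℝ) * ((z γ : ℤ) : ℝ) :=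
    bb_phi B N φ hφ Bb hBbcompat z γ
  have h2 : Bb (iota ((φ z : Fin g → ℤ))) (iota ((φ z : Fin g → ℤ)))
      = (N : ℝ) * ((z ((φ z : Fin g → ℤ)) : ℤ) : ℝ) :=
    bb_phi B N φ hφ Bb hBbcompat z _
  have h3 : Bb (iota γ) (iota ((φ z : Fin g → ℤ))) = (N : ℝ) * ((z γ : ℤ) : ℝ) := by
    rw [hBbsymm]; exact h1
  simp only [map_add, map_smul, LinearMap.add_apply, LinearMap.smul_apply, smul_eq_mul]
  rw [h1, h2, h3]
  simp only [El]
  push_cast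
  ring

include hBbcompat in
lemma q_int (w : Fin g → ℤ) :
    ∃ k : ℤ, (k : ℝ) = (Y.toAddSubgroup.index : ℝ) * Bb (iota w) (iota w) := by
  set n := Y.toAddSubgroup.index with hn
  refine ⟨B ⟨(n : ℤ) • w, idx_smul_mem Y w⟩ w, ?_⟩
  rw [← hBbcompat ⟨(n : ℤ) • w, idx_smul_mem Y w⟩ w]
  show (Bb (iota ((n:ℤ) • w)) (iota w) : ℝ) = _
  rw [iota_zsmul]
  simp [mul_comm]

include hBpos hφ hBbsymm hBbpos hBbcompat in
lemma decomp (hYfin : Y.toAddSubgroup.index ≠ 0) (hNpos : 0 < N)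
    (ℓ : ℕ) (hℓ : 0 < ℓ) (x : Fin g → ℤ) :
    ∃ γ ∈ SigmaL φ ℓ, ∃ z : (Fin g → ℤ) →ₗ[ℤ] ℤ,
      x = γ + (2 * (ℓ:ℤ)) • ((φ z : Fin g → ℤ)) := by
  classical
  set n := Y.toAddSubgroup.index with hn
  have hnpos : (0:ℝ) < (n:ℝ) := by
    have h := Nat.pos_of_ne_zero hYfin
    exact_mod_cast h
  set P : ℤ → Prop := fun k =>
    0 ≤ k ∧ ∃ z : (Fin g → ℤ) →ₗ[ℤ] ℤ,
      (k : ℝ) = (n : ℝ) * Bb (iota (x - (2 * (ℓ:ℤ)) • ((φ z : Fin g → ℤ))))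
                          (iota (x - (2 * (ℓ:ℤ)) • ((φ z : Fin g → ℤ)))) with hP
  have hinh : ∃ k, P k := by
    obtain ⟨k, hk⟩ := q_int B Bb hBbcompat
      (x - (2 * (ℓ:ℤ)) • ((φ 0 : Fin g → ℤ)))
    refine ⟨k, ?_, 0, hk⟩
    have h0 : (0:ℝ) ≤ (k : ℝ) := by
      rw [hk]
      exact mul_nonneg hnpos.le (bb_nonneg Bb hBbpos _)
    exact_mod_cast h0
  obtain ⟨k₀, ⟨hk₀0, z₀, hz₀⟩, hmin⟩ :=
    Int.exists_least_of_bdd ⟨0, fun z hz => hz.1⟩ hinh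
  set γ : Fin g → ℤ := x - (2 * (ℓ:ℤ)) • ((φ z₀ : Fin g → ℤ)) with hγ
  refine ⟨γ, ?_, z₀, by rw [hγ]; abel⟩
  intro u
  obtain ⟨k', hk'⟩ := q_int B Bb hBbcompat
    (x - (2 * (ℓ:ℤ)) • ((φ (z₀ - u) : Fin g → ℤ)))
  have hP' : P k' := by
    refine ⟨?_, z₀ - u, hk'⟩
    have h0 : (0:ℝ) ≤ (k' : ℝ) := by
      rw [hk']
      exact mul_nonneg hnpos.le (bb_nonneg Bb hBbpos _)
    exact_mod_cast h0
  have hle := hmin k' hP'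
  have hler : (k₀ : ℝ) ≤ (k' : ℝ) := by exact_mod_cast hle
  rw [hz₀, hk'] at hler
  have hsub : x - (2 * (ℓ:ℤ)) • ((φ (z₀ - u) : Fin g → ℤ))
      = γ + (2 * (ℓ:ℤ)) • ((φ u : Fin g → ℤ)) := by
    rw [hγ, phi_sub B hBpos N φ hφ]
    push_cast [AddSubgroupClass.coe_sub]
    module
  rw [hsub, q_expand B N φ hφ Bb hBbsymm hBbcompat ℓ γ u, ← hn] at hler
  have h4 : (0:ℝ) < 4 * (ℓ:ℝ) * (N:ℝ) := by positivity
  have key : (0:ℝ) ≤ ((El φ ℓ u : ℤ) : ℝ) + ((u γ : ℤ) : ℝ) := by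
    nlinarith [mul_pos hnpos h4, hnpos, h4]
  exact_mod_cast key

end structural


end auxiliary

private lemma arith_qx2S {p Mstar lN S qx : ℝ} (hx : p * Mstar * lN ≤ qx)
    (h2t : 2 ≤ p) (hM : 0 < Mstar) (hS2M : S^2 ≤ Mstar * lN) (hl : 0 < lN) :
    2 * S^2 ≤ qx := by nlinarith

private lemma arith_sq_le {n u q : ℝ} (h : n ≤ u) (hn0 : 0 ≤ n) (hsq : n^2 = q) :
    q ≤ u^2 := by nlinarith

private lemma arith_sq_ge {n a q : ℝ} (h : a ≤ n) (ha : 0 ≤ a) (hsq : n^2 = q) :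
    a^2 ≤ q := by nlinarith

private lemma arith_q1l {s c q1 : ℝ} (h : (3/4*s - c)^2 ≤ q1) (hc0 : 0 ≤ c)
    (h24 : 24*c ≤ s) : s^2/2 ≤ q1 := by
  nlinarith [mul_nonneg hc0 (by linarith : (0:ℝ) ≤ s - 24*c)]

private lemma arith_big {s c e r K0 qx q1 q2 : ℝ}
    (hq1u : q1 ≤ (3/4*s + c)^2) (hq2u : q2 ≤ (1/4*s + e)^2) (hssq : s^2 = qx)
    (hc0 : 0 ≤ c) (he0 : 0 ≤ e) (hr0 : 0 ≤ r) (hK00 : 0 ≤ K0)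
    (h24 : 24*c ≤ s) (h16 : 16*e ≤ s) (h17 : 17 + r ≤ s) (hr2 : r^2 = 8*K0)
    (hs0 : 0 ≤ s) : K0 < qx - q1 - q2 := by
  have e1 : (3/2)*c*s + c^2 ≤ (1/8)*s*s := by
    nlinarith [mul_nonneg hc0 (by linarith : (0:ℝ) ≤ s - 24*c),
      mul_nonneg hs0 (by linarith : (0:ℝ) ≤ s - 24*c)]
  have e2 : (1/2)*e*s + e^2 ≤ (1/8)*s*s := by
    nlinarith [mul_nonneg he0 (by linarith : (0:ℝ) ≤ s - 16*e),
      mul_nonneg hs0 (by linarith : (0:ℝ) ≤ s - 16*e)]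
  have e3 : K0 < (1/8)*s*s := by nlinarith [h17, hr0, hr2, hs0]
  nlinarith [e1, e2, e3]

private lemma arith_gain {Dr lN qx q1 q2 gx g1 g2 K0 : ℝ}
    (hexp : Dr * lN = (qx - gx) - (q1 - g1) - (q2 - g2))
    (hbig : K0 < qx - q1 - q2) (hgx : gx ≤ K0) (hg1 : 0 ≤ g1) (hg2 : 0 ≤ g2)
    (hl : 0 < lN) : 0 < Dr := by nlinarith

set_option maxHeartbeats 1000000 in
/-- there is `M* > 0` such that whenever `C_ℓ(x) ≥ 2^t·M*`, the element
`(D_ℓ(x) − t, x − α)` lies in the weight monoid `M_α` (i.e. `s^{D_ℓ(x)}w^{x−α} ∈ I^t·A_{ℓ,α,0}`). -/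
theorem statement10
    (g : ℕ) (hg : 1 ≤ g)
    (Y : Submodule ℤ (Fin g → ℤ))
    (hYfin : Y.toAddSubgroup.index ≠ 0)
    (B : Y →ₗ[ℤ] (Fin g → ℤ) →ₗ[ℤ] ℤ)
    (hBsymm : ∀ y z : Y, B y (z : Fin g → ℤ) = B z (y : Fin g → ℤ))
    (hBpos : ∀ y : Y, y ≠ 0 → 0 < B y (y : Fin g → ℤ))
    (N : ℕ) (hN : N = (LinearMap.range B).toAddSubgroup.index) (hNpos : 0 < N)
    (φ : ((Fin g → ℤ) →ₗ[ℤ] ℤ) → Y)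
    (hφ : ∀ u : (Fin g → ℤ) →ₗ[ℤ] ℤ, B (φ u) = (N : ℤ) • u)
    (Bb : (Fin g → ℝ) →ₗ[ℝ] (Fin g → ℝ) →ₗ[ℝ] ℝ)
    (hBbsymm : ∀ x y : Fin g → ℝ, Bb x y = Bb y x)
    (hBbpos : ∀ x : Fin g → ℝ, x ≠ 0 → 0 < Bb x x)
    (hBbcompat : ∀ (y : Y) (x : Fin g → ℤ), Bb (iota (y : Fin g → ℤ)) (iota x) = (B y x : ℝ))
    (ℓ : ℕ) (hℓ : 0 < ℓ)
    (D : (Fin g → ℤ) → ℤ)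
    (hD : ∀ γ ∈ SigmaL φ ℓ, ∀ z : (Fin g → ℤ) →ₗ[ℤ] ℤ,
      D (γ + (2 * (ℓ : ℤ)) • ((φ z : Fin g → ℤ))) = El φ ℓ z + z γ)
    (hint : IsIntegral (VorP Bb φ ℓ 0))
    (α : Fin g → ℤ) (hα : α ∈ SigmaL φ ℓ) :
    ∃ Mstar : ℝ, 0 < Mstar ∧ ∀ (t : ℕ) (x : Fin g → ℤ),
      (2 : ℝ) ^ t * Mstar ≤ Bb (iota x) (iota x) / (4 * (ℓ : ℝ) * (N : ℝ)) →
      ((D x - (t : ℤ), x - α) ∈ AddSubmonoid.closure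
        (insert ((1 : ℤ), (0 : Fin g → ℤ))
          {p : ℤ × (Fin g → ℤ) | ∃ y : Fin g → ℤ, p = (D y, y - α)})) := by
  classical
  have hq0 : ∀ v : Fin g → ℝ, 0 ≤ Bb v v := bb_nonneg Bb hBbpos
  have h4lN : (0:ℝ) < 4 * (ℓ:ℝ) * (N:ℝ) := by positivity
  -- constants
  set b : Fin g → Fin g → ℝ := fun i j => Bb (Pi.single i 1) (Pi.single j 1) with hb
  set cb : ℝ := ∑ i, ∑ j, |b i j| with hcb
  have hcb0 : 0 ≤ cb :=
    Finset.sum_nonneg fun i _ => Finset.sum_nonneg fun j _ => abs_nonneg _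
  set c : ℝ := Real.sqrt cb with hc
  have hc0 : 0 ≤ c := Real.sqrt_nonneg _
  -- E_ℓ is nonnegative
  have hEl0 : ∀ u : (Fin g → ℤ) →ₗ[ℤ] ℤ, 0 ≤ El φ ℓ u := by
    intro u
    have h1 : 0 ≤ B (φ u) ((φ u : Fin g → ℤ)) := by
      rcases eq_or_ne (φ u) 0 with h | h
      · simp [h]
      · exact (hBpos _ h).le
    rw [hφ u, LinearMap.smul_apply, smul_eq_mul] at h1
    have h2 : 0 ≤ u ((φ u : Fin g → ℤ)) := by
      by_contra hcon
      push_neg at hcon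
      have : (N:ℤ) * u ((φ u : Fin g → ℤ)) < 0 :=
        mul_neg_of_pos_of_neg (by exact_mod_cast hNpos) hcon
      omega
    have : (0:ℤ) ≤ (ℓ:ℤ) := by positivity
    exact mul_nonneg this h2
  have hElneg : ∀ u : (Fin g → ℤ) →ₗ[ℤ] ℤ, El φ ℓ (-u) = El φ ℓ u := by
    intro u
    unfold El
    rw [phi_neg B hBpos N φ hφ]
    simp
  set A : Fin g → ℝ := fun i => ((El φ ℓ (LinearMap.proj i) : ℤ) : ℝ) with hA
  have hA0 : ∀ i, (0:ℝ) ≤ A i := by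
    intro i
    have := hEl0 (LinearMap.proj i)
    simp only [hA]
    exact_mod_cast this
  set K0 : ℝ := ∑ i, ∑ j, A i * A j * |b i j| with hK0
  have hK00 : 0 ≤ K0 :=
    Finset.sum_nonneg fun i _ => Finset.sum_nonneg fun j _ =>
      mul_nonneg (mul_nonneg (hA0 i) (hA0 j)) (abs_nonneg _)
  -- bound on SigmaL
  have hSig : ∀ γ ∈ SigmaL φ ℓ, Bb (iota γ) (iota γ) ≤ K0 := by
    intro γ hγ
    apply bb_bound
    intro i
    have h1 := hγ (LinearMap.proj i)
    have h2 := hγ (-(LinearMap.proj i))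
    rw [hElneg] at h2
    simp only [LinearMap.neg_apply, LinearMap.proj_apply] at h1 h2
    have habs : |γ i| ≤ El φ ℓ (LinearMap.proj i) := by
      rw [abs_le]
      constructor <;> [linarith [h1]; linarith [h2]]
    have : |(iota γ) i| = ((|γ i| : ℤ) : ℝ) := by
      simp [iota, Int.cast_abs]
    rw [this]
    simp only [hA]
    exact_mod_cast habs
  -- D characterization
  have hDchar : ∀ x : Fin g → ℤ, ∃ γ ∈ SigmaL φ ℓ,
      ((D x : ℤ) : ℝ) * (4 * (ℓ:ℝ) * (N:ℝ))
        = Bb (iota x) (iota x) - Bb (iota γ) (iota γ) := by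
    intro x
    obtain ⟨γ, hγ, z, hx⟩ :=
      decomp B hBpos N φ hφ Bb hBbsymm hBbpos hBbcompat hYfin hNpos ℓ hℓ x
    refine ⟨γ, hγ, ?_⟩
    rw [hx, hD γ hγ z, q_expand B N φ hφ Bb hBbsymm hBbcompat ℓ γ z]
    push_cast
    ring
  -- the constant
  have hαq : Bb (iota α) (iota α) ≤ K0 := hSig α hα
  set e : ℝ := c + Real.sqrt K0 with he
  have he0 : 0 ≤ e := add_nonneg hc0 (Real.sqrt_nonneg _)
  set r : ℝ := Real.sqrt (8 * K0) with hr
  have hr0 : 0 ≤ r := Real.sqrt_nonneg _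
  have hr2 : r ^ 2 = 8 * K0 := Real.sq_sqrt (by linarith [hK00])
  set S : ℝ := 24*c + 16*e + 17 + r with hS
  have hS0 : (0:ℝ) ≤ S := by rw [hS]; linarith [hc0, he0, hr0]
  set Mstar : ℝ := max 1 (S^2 / (4 * (ℓ:ℝ) * (N:ℝ))) with hM
  have hM1 : (1:ℝ) ≤ Mstar := le_max_left _ _
  have hMpos : (0:ℝ) < Mstar := lt_of_lt_of_le one_pos hM1
  have hMge : S^2 / (4 * (ℓ:ℝ) * (N:ℝ)) ≤ Mstar := le_max_right _ _
  have hS2M : S^2 ≤ Mstar * (4 * (ℓ:ℝ) * (N:ℝ)) := (div_le_iff₀ h4lN).mp hMge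
  refine ⟨Mstar, hMpos, ?_⟩
  intro t
  induction t with
  | zero =>
    intro x _
    have hmem : ((D x : ℤ), x - α) ∈ AddSubmonoid.closure
        (insert ((1 : ℤ), (0 : Fin g → ℤ))
          {p : ℤ × (Fin g → ℤ) | ∃ y : Fin g → ℤ, p = (D y, y - α)}) :=
      AddSubmonoid.subset_closure (Set.mem_insert_iff.mpr (Or.inr ⟨x, rfl⟩))
    simpa using hmem
  | succ t ih =>
    intro x hx
    set x₁ : Fin g → ℤ := fun i => (3 * x i) / 4 with hx₁
    set x₂ : Fin g → ℤ := x - x₁ + α with hx₂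
    set s : ℝ := Real.sqrt (Bb (iota x) (iota x)) with hs
    have hs0 : 0 ≤ s := Real.sqrt_nonneg _
    have hssq : s ^ 2 = Bb (iota x) (iota x) := Real.sq_sqrt (hq0 _)
    -- from the largeness assumption
    rw [le_div_iff₀ h4lN] at hx
    have h2t : (2:ℝ) ≤ 2 ^ (t+1) := by
      calc (2:ℝ) = 2^1 := (pow_one 2).symm
        _ ≤ 2^(t+1) := by
          apply pow_le_pow_right₀ one_le_two
          omega
    have hqx2S : 2 * S^2 ≤ Bb (iota x) (iota x) := arith_qx2S hx h2t hMpos hS2M h4lN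
    have hsS : S ≤ s := by
      have h1 : S = Real.sqrt (S^2) := (Real.sqrt_sq hS0).symm
      rw [h1, hs]
      apply Real.sqrt_le_sqrt
      linarith [hqx2S, sq_nonneg S]
    -- rounding
    set d : Fin g → ℝ := iota x₁ - (3/4 : ℝ) • iota x with hd
    have hdi : ∀ i, |d i| ≤ 1 := by
      intro i
      have h1 : (3 * x i) / 4 * 4 ≤ 3 * x i := Int.ediv_mul_le (3 * x i) (by norm_num)
      have h2 : 3 * x i < ((3 * x i) / 4 + 1) * 4 := Int.lt_ediv_add_one_mul_self (3 * x i) (by norm_num)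
      have hd1 : d i = (((3 * x i) / 4 : ℤ) : ℝ) - 3/4 * ((x i : ℤ) : ℝ) := by
        simp [hd, iota, hx₁]
      rw [hd1, abs_le]
      have h1r : (((3 * x i)/4 : ℤ) : ℝ) * 4 ≤ 3 * ((x i : ℤ):ℝ) := by exact_mod_cast h1
      have h2r : 3 * ((x i : ℤ):ℝ) < ((((3 * x i)/4 : ℤ):ℝ) + 1) * 4 := by exact_mod_cast h2
      constructor <;> linarith
    have hdq : Bb d d ≤ cb := by
      have := bb_bound Bb d (fun _ => (1:ℝ)) hdi
      simpa [hcb, hb] using this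
    have hdn : Real.sqrt (Bb d d) ≤ c := by
      rw [hc]
      exact Real.sqrt_le_sqrt hdq
    have hiota1 : iota x₁ = (3/4:ℝ) • iota x + d := by rw [hd]; abel
    have hiota2 : iota x₂ = ((1/4:ℝ) • iota x - d) + iota α := by
      rw [hx₂, iota_add, iota_sub, hiota1]
      module
    -- norm bounds
    have hsm34 : Real.sqrt (Bb ((3/4:ℝ) • iota x) ((3/4:ℝ) • iota x)) = (3/4) * s := by
      rw [nn_smul Bb (3/4) (iota x), hs]
      norm_num
    have hsm14 : Real.sqrt (Bb ((1/4:ℝ) • iota x) ((1/4:ℝ) • iota x)) = (1/4) * s := by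
      rw [nn_smul Bb (1/4) (iota x), hs]
      norm_num
    have hn1u : Real.sqrt (Bb (iota x₁) (iota x₁)) ≤ (3/4)*s + c := by
      rw [hiota1]
      calc Real.sqrt (Bb ((3/4:ℝ) • iota x + d) ((3/4:ℝ) • iota x + d))
          ≤ Real.sqrt (Bb ((3/4:ℝ) • iota x) ((3/4:ℝ) • iota x)) + Real.sqrt (Bb d d) :=
            nn_add_le Bb hBbsymm hBbpos _ _
        _ ≤ (3/4)*s + c := by rw [hsm34]; linarith [hdn]
    have hn1l : (3/4)*s - c ≤ Real.sqrt (Bb (iota x₁) (iota x₁)) := by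
      have hrw : (3/4:ℝ) • iota x = iota x₁ + (-d) := by rw [hiota1]; abel
      have h := nn_add_le Bb hBbsymm hBbpos (iota x₁) (-d)
      rw [← hrw] at h
      have hnegd : Real.sqrt (Bb (-d) (-d)) = Real.sqrt (Bb d d) := by
        have : Bb (-d) (-d) = Bb d d := by simp
        rw [this]
      rw [hnegd, hsm34] at h
      linarith [hdn]
    have hnα : Real.sqrt (Bb (iota α) (iota α)) ≤ Real.sqrt K0 := Real.sqrt_le_sqrt hαq
    have hn2u : Real.sqrt (Bb (iota x₂) (iota x₂)) ≤ (1/4)*s + e := by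
      rw [hiota2]
      calc Real.sqrt (Bb (((1/4:ℝ) • iota x - d) + iota α) (((1/4:ℝ) • iota x - d) + iota α))
          ≤ Real.sqrt (Bb ((1/4:ℝ) • iota x - d) ((1/4:ℝ) • iota x - d))
            + Real.sqrt (Bb (iota α) (iota α)) := nn_add_le Bb hBbsymm hBbpos _ _
        _ ≤ (Real.sqrt (Bb ((1/4:ℝ) • iota x) ((1/4:ℝ) • iota x))
              + Real.sqrt (Bb (-d) (-d))) + Real.sqrt (Bb (iota α) (iota α)) := by
            have h := nn_add_le Bb hBbsymm hBbpos ((1/4:ℝ) • iota x) (-d)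
            have hrw : (1/4:ℝ) • iota x + (-d) = (1/4:ℝ) • iota x - d := by abel
            rw [hrw] at h
            linarith [h]
        _ ≤ (1/4)*s + e := by
            have hnegd : Real.sqrt (Bb (-d) (-d)) = Real.sqrt (Bb d d) := by
              have : Bb (-d) (-d) = Bb d d := by simp
              rw [this]
            rw [hsm14, hnegd, he]
            linarith [hdn, hnα]
    -- squared bounds
    have hq1sq := Real.sq_sqrt (hq0 (iota x₁))
    have hq2sq := Real.sq_sqrt (hq0 (iota x₂))
    have hq1n0 := Real.sqrt_nonneg (Bb (iota x₁) (iota x₁))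
    have hq2n0 := Real.sqrt_nonneg (Bb (iota x₂) (iota x₂))
    have hq1u : Bb (iota x₁) (iota x₁) ≤ ((3/4)*s + c)^2 := arith_sq_le hn1u hq1n0 hq1sq
    have hq2u : Bb (iota x₂) (iota x₂) ≤ ((1/4)*s + e)^2 := arith_sq_le hn2u hq2n0 hq2sq
    have hs24c : 24*c ≤ s := by
      have h : 24*c ≤ S := by rw [hS]; linarith [he0, hr0]
      linarith [hsS]
    have hs16e : 16*e ≤ s := by
      have h : 16*e ≤ S := by rw [hS]; linarith [hc0, hr0]
      linarith [hsS]
    have hs17r : 17 + r ≤ s := by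
      have h : 17 + r ≤ S := by rw [hS]; linarith [hc0, he0]
      linarith [hsS]
    have hq1l : s^2/2 ≤ Bb (iota x₁) (iota x₁) := by
      have ha0 : (0:ℝ) ≤ 3/4*s - c := by linarith [hs24c, hc0]
      have hge : (3/4*s - c)^2 ≤ Bb (iota x₁) (iota x₁) := by
        refine arith_sq_ge ?_ ha0 hq1sq
        linarith [hn1l]
      exact arith_q1l hge hc0 hs24c
    -- the key gain inequality
    have hbig : K0 < Bb (iota x) (iota x)
        - Bb (iota x₁) (iota x₁) - Bb (iota x₂) (iota x₂) :=
      arith_big hq1u hq2u hssq hc0 he0 hr0 hK00 hs24c hs16e hs17r hr2 hs0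
    obtain ⟨γx, hγx, hDx⟩ := hDchar x
    obtain ⟨γ1, hγ1, hD1⟩ := hDchar x₁
    obtain ⟨γ2, hγ2, hD2⟩ := hDchar x₂
    have hγxK : Bb (iota γx) (iota γx) ≤ K0 := hSig _ hγx
    have hγ10 : 0 ≤ Bb (iota γ1) (iota γ1) := hq0 _
    have hγ20 : 0 ≤ Bb (iota γ2) (iota γ2) := hq0 _
    have hgain : 1 ≤ D x - D x₁ - D x₂ := by
      have hre : (0:ℝ) < ((D x - D x₁ - D x₂ : ℤ) : ℝ) := by
        have hexp : ((D x - D x₁ - D x₂ : ℤ) : ℝ) * (4 * (ℓ:ℝ) * (N:ℝ))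
            = (Bb (iota x) (iota x) - Bb (iota γx) (iota γx))
              - (Bb (iota x₁) (iota x₁) - Bb (iota γ1) (iota γ1))
              - (Bb (iota x₂) (iota x₂) - Bb (iota γ2) (iota γ2)) := by
          push_cast
          linear_combination hDx - hD1 - hD2
        exact arith_gain hexp hbig hγxK hγ10 hγ20 h4lN
      have : (0:ℤ) < D x - D x₁ - D x₂ := by exact_mod_cast hre
      omega
    -- apply induction hypothesis to x₁
    have hx1cond : (2:ℝ)^t * Mstar ≤ Bb (iota x₁) (iota x₁) / (4 * (ℓ:ℝ) * (N:ℝ)) := by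
      rw [le_div_iff₀ h4lN]
      have hpow : (2:ℝ)^(t+1) = 2 * 2^t := by ring
      rw [hpow] at hx
      linarith [hq1l, hssq, hx]
    have ih1 := ih x₁ hx1cond
    have hmem2 : ((D x₂ : ℤ), x₂ - α) ∈ AddSubmonoid.closure
        (insert ((1 : ℤ), (0 : Fin g → ℤ))
          {p : ℤ × (Fin g → ℤ) | ∃ y : Fin g → ℤ, p = (D y, y - α)}) :=
      AddSubmonoid.subset_closure (Set.mem_insert_iff.mpr (Or.inr ⟨x₂, rfl⟩))
    have hmem1 : ((1 : ℤ), (0 : Fin g → ℤ)) ∈ AddSubmonoid.closure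
        (insert ((1 : ℤ), (0 : Fin g → ℤ))
          {p : ℤ × (Fin g → ℤ) | ∃ y : Fin g → ℤ, p = (D y, y - α)}) :=
      AddSubmonoid.subset_closure (Set.mem_insert _ _)
    set k : ℕ := (D x - D x₁ - D x₂ - 1).toNat with hk
    have hkc : (k : ℤ) = D x - D x₁ - D x₂ - 1 := Int.toNat_of_nonneg (by omega)
    have heq : ((D x - ((t+1 : ℕ) : ℤ)), x - α)
        = ((D x₁ - (t : ℤ), x₁ - α)
            + (((D x₂ : ℤ), x₂ - α) + k • ((1:ℤ), (0 : Fin g → ℤ)))) := by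
      have hsmul : k • ((1:ℤ), (0 : Fin g → ℤ)) = ((k : ℤ), (0 : Fin g → ℤ)) := by
        simp [Prod.smul_mk, nsmul_eq_mul]
      rw [hsmul, Prod.mk_add_mk, Prod.mk_add_mk, Prod.mk.injEq]
      constructor
      · push_cast
        omega
      · rw [hx₂]
        funext i
        simp only [Pi.add_apply, Pi.sub_apply, Pi.zero_apply]
        ring
    rw [heq]
    exact AddSubmonoid.add_mem _ ih1
      (AddSubmonoid.add_mem _ hmem2 (nsmul_mem hmem1 k))


end NFC
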